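/- arXiv:1412.4646 — 2 statements merged into one kernel-verified Lean document; each statement's English description precedes it below -/
import Mathlib

section
/- The number of runs in a word of length n is strictly less than n. -/
open List

universe u

/-- The factor `w[i..j]` of a word (inclusive positions). -/
def factor {α : Type u} (w : List α) (i j : ℕ) : List α := (w.drop i).take (j - i + 1)

/-- `p` is a period length of the word `u`. -/
def HasPeriodLen {α : Type u} (u : List α) (p : ℕ) : Prop :=
  1 ≤ p ∧ ∀ k, k + p < u.length → u[k]? = u[k + p]?

/-- The smallest period of a word. -/
noncomputable def minPeriod {α : Type u} (u : List α) : ℕ := sInf {p | HasPeriodLen u p}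

/-- `[i..j]` is a run in `w`: the factor is periodic with smallest period at most half
its length, and the periodicity extends neither to the left nor to the right. -/
def IsRun {α : Type u} (w : List α) (i j : ℕ) : Prop :=
  i < j ∧ j < w.length ∧
  2 * minPeriod (factor w i j) ≤ j - i + 1 ∧
  (0 < i → minPeriod (factor w i j) < minPeriod (factor w (i - 1) j)) ∧
  (j + 1 < w.length → minPeriod (factor w i j) < minPeriod (factor w i (j + 1)))

section Aux
variable {α : Type u}

theorem factor_getElem? (w : List α) (i j k : ℕ) (hk : k < j - i + 1) :
    (factor w i j)[k]? = w[i + k]? := by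
  unfold factor
  rw [List.getElem?_take, if_pos hk, List.getElem?_drop]

theorem factor_length (w : List α) (i j : ℕ) (hij : i ≤ j) (hj : j < w.length) :
    (factor w i j).length = j - i + 1 := by
  unfold factor
  rw [List.length_take, List.length_drop]
  omega

theorem minPeriod_mem (u : List α) : HasPeriodLen u (minPeriod u) := by
  have : (u.length + 1) ∈ {p | HasPeriodLen u p} := ⟨by omega, fun k hk => by omega⟩
  exact Nat.sInf_mem ⟨_, this⟩

theorem minPeriod_le (u : List α) (p : ℕ) (h : HasPeriodLen u p) : minPeriod u ≤ p :=
  Nat.sInf_le h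

/-- periodicity on an interval of `w`, in `getElem?` form -/
def PeriodOn (w : List α) (i j p : ℕ) : Prop :=
  ∀ t, i ≤ t → t + p ≤ j → w[t]? = w[t + p]?

theorem hasPeriodLen_factor_iff (w : List α) (i j p : ℕ) (hij : i ≤ j) (hj : j < w.length)
    (hp : 1 ≤ p) : HasPeriodLen (factor w i j) p ↔ PeriodOn w i j p := by
  constructor
  · rintro ⟨-, h⟩ t ht htp
    have h2 := h (t - i) (by rw [factor_length w i j hij hj]; omega)
    rw [factor_getElem? w i j _ (by omega), factor_getElem? w i j _ (by omega)] at h2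
    have e1 : i + (t - i) = t := by omega
    have e2 : i + (t - i + p) = t + p := by omega
    rwa [e1, e2] at h2
  · intro h
    refine ⟨hp, fun k hk => ?_⟩
    rw [factor_length w i j hij hj] at hk
    rw [factor_getElem? w i j _ (by omega), factor_getElem? w i j _ (by omega)]
    have := h (i + k) (by omega) (by omega)
    rwa [show i + k + p = i + (k + p) by omega] at this

/-- step by multiples of the period -/
theorem periodOn_mul (w : List α) {i j p : ℕ} (h : PeriodOn w i j p) :
    ∀ m t, i ≤ t → t + m * p ≤ j → w[t]? = w[t + m * p]? := by
  intro m
  induction m with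
  | zero => simp
  | succ m ih =>
    intro t ht htp
    have h1 := ih t ht (by nlinarith)
    have h2 := h (t + m * p) (by omega) (by rw [Nat.succ_mul] at htp; omega)
    rw [h1, h2, Nat.succ_mul, Nat.add_assoc]

/-- positions congruent mod p in a p-periodic interval carry equal letters -/
theorem periodOn_eq_of_mod (w : List α) {i j p : ℕ} (hp : 0 < p) (h : PeriodOn w i j p)
    {t u : ℕ} (ht : i ≤ t) (ht' : t ≤ j) (hu : i ≤ u) (hu' : u ≤ j) (hmod : t % p = u % p) :
    w[t]? = w[u]? := by
  rcases Nat.le_total t u with hle | hle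
  · obtain ⟨m, rfl⟩ : ∃ m, u = t + m * p := by
      obtain ⟨c, hc⟩ := (Nat.modEq_iff_dvd' hle).mp hmod
      exact ⟨c, by rw [Nat.mul_comm c p]; omega⟩
    exact periodOn_mul w h _ t ht (by omega)
  · obtain ⟨m, rfl⟩ : ∃ m, t = u + m * p := by
      obtain ⟨c, hc⟩ := (Nat.modEq_iff_dvd' hle).mp hmod.symm
      exact ⟨c, by rw [Nat.mul_comm c p]; omega⟩
    exact (periodOn_mul w h _ u hu (by omega)).symm

theorem run_period (w : List α) {i j : ℕ} (h : IsRun w i j) :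
    PeriodOn w i j (minPeriod (factor w i j)) := by
  obtain ⟨h1, h2, -, -, -⟩ := h
  have hm := minPeriod_mem (factor w i j)
  exact (hasPeriodLen_factor_iff w i j _ (by omega) h2 hm.1).mp hm

theorem run_pos (w : List α) {i j : ℕ} (h : IsRun w i j) :
    1 ≤ minPeriod (factor w i j) := (minPeriod_mem (factor w i j)).1

/-- left maximality: the letter before the run breaks the period -/
theorem run_left (w : List α) {i j : ℕ} (h : IsRun w i j) (hi : 0 < i) :
    w[i - 1]? ≠ w[i - 1 + minPeriod (factor w i j)]? := by
  intro heq
  obtain ⟨h1, h2, h3, h4, h5⟩ := h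
  set p := minPeriod (factor w i j) with hp
  have hper := run_period w ⟨h1, h2, h3, h4, h5⟩
  have hp1 : 1 ≤ p := run_pos w ⟨h1, h2, h3, h4, h5⟩
  have : PeriodOn w (i-1) j p := by
    intro t ht htp
    rcases Nat.eq_or_lt_of_le ht with he | hlt
    · rwa [← he]
    · exact hper t (by omega) htp
  have := minPeriod_le _ p ((hasPeriodLen_factor_iff w (i-1) j p (by omega) h2 hp1).mpr this)
  exact absurd (h4 hi) (by omega)

/-- right maximality -/
theorem run_right (w : List α) {i j : ℕ} (h : IsRun w i j) (hj : j + 1 < w.length) :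
    w[j + 1]? ≠ w[j + 1 - minPeriod (factor w i j)]? := by
  intro heq
  obtain ⟨h1, h2, h3, h4, h5⟩ := h
  set p := minPeriod (factor w i j) with hp
  have hper := run_period w ⟨h1, h2, h3, h4, h5⟩
  have hp1 : 1 ≤ p := run_pos w ⟨h1, h2, h3, h4, h5⟩
  have hpj : p ≤ j - i := by omega
  have : PeriodOn w i (j+1) p := by
    intro t ht htp
    rcases Nat.eq_or_lt_of_le htp with he | hlt
    · have e2 : t + p = j + 1 := by omega
      have e1 : t = j + 1 - p := by omega
      rw [e2, e1]; exact heq.symm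
    · exact hper t ht (by omega)
  have := minPeriod_le _ p ((hasPeriodLen_factor_iff w i (j+1) p (by omega) hj hp1).mpr this)
  exact absurd (h5 hj) (by omega)

section LexChar
variable {r : α → α → Prop}

theorem lex_iff : ∀ {x y : List α}, Lex r x y ↔
    ((x <+: y ∧ x ≠ y) ∨ ∃ (d : ℕ) (a b : α), (∀ t, t < d → x[t]? = y[t]?) ∧
      x[d]? = some a ∧ y[d]? = some b ∧ r a b)
  | [], [] => by
    constructor
    · intro h; exact absurd h List.not_lex_nil
    · rintro (⟨-, h⟩ | ⟨d, a, b, -, h, -⟩)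
      · exact absurd rfl h
      · simp at h
  | [], b :: y' => by
    constructor
    · intro _; exact Or.inl ⟨⟨b :: y', rfl⟩, by simp⟩
    · intro _; exact Lex.nil
  | a :: x', [] => by
    constructor
    · intro h; exact absurd h List.not_lex_nil
    · rintro (⟨⟨t, ht⟩, -⟩ | ⟨d, a', b', -, -, h, -⟩)
      · simp at ht
      · simp at h
  | a :: x', b :: y' => by
    constructor
    · intro h
      cases h with
      | rel hab => exact Or.inr ⟨0, a, b, fun t ht => absurd ht (Nat.not_lt_zero t), by simp, by simp, hab⟩
      | cons h =>
        rcases (lex_iff (x := x') (y := y')).mp h with ⟨hpre, hne⟩ | ⟨d, a', b', he, h1, h2, hr⟩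
        · exact Or.inl ⟨(by obtain ⟨s, hs⟩ := hpre; exact ⟨s, by rw [List.cons_append, hs]⟩ : a :: x' <+: a :: y'), by simpa using hne⟩
        · refine Or.inr ⟨d + 1, a', b', ?_, by simpa using h1, by simpa using h2, hr⟩
          intro t ht
          cases t with
          | zero => simp
          | succ t => simpa using he t (by omega)
    · rintro (⟨⟨s, hs⟩, hne⟩ | ⟨d, a', b', he, h1, h2, hr⟩)
      · rw [List.cons_append] at hs
        injection hs with hab hs
        subst hab
        exact Lex.cons ((lex_iff (x := x') (y := y')).mpr
          (Or.inl ⟨⟨s, hs⟩, fun h => hne (by rw [h])⟩))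
      · cases d with
        | zero =>
          simp only [List.getElem?_cons_zero, Option.some.injEq] at h1 h2
          subst h1; subst h2
          exact Lex.rel hr
        | succ d =>
          have hab : a = b := by
            have := he 0 (by omega)
            simpa using this
          subst hab
          refine Lex.cons ((lex_iff (x := x') (y := y')).mpr (Or.inr ⟨d, a', b', ?_,
            by simpa using h1, by simpa using h2, hr⟩))
          intro t ht
          simpa using he (t + 1) (by omega)

theorem lex_of_prefix {x y : List α} (h : x <+: y) (hne : x ≠ y) : Lex r x y :=
  lex_iff.mpr (Or.inl ⟨h, hne⟩)

theorem lex_of_diff {x y : List α} {d : ℕ} {a b : α}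
    (he : ∀ t, t < d → x[t]? = y[t]?) (h1 : x[d]? = some a) (h2 : y[d]? = some b)
    (hr : r a b) : Lex r x y :=
  lex_iff.mpr (Or.inr ⟨d, a, b, he, h1, h2, hr⟩)

theorem lex_asymm [IsAsymm α r] {x y : List α} (h : Lex r x y) : ¬ Lex r y x :=
  _root_.asymm h

theorem lex_trichot [IsTrichotomous α r] (x y : List α) :
    Lex r x y ∨ x = y ∨ Lex r y x :=
  trichotomous_of (Lex r) x y

end LexChar

section LexMore
variable {r : α → α → Prop}

theorem lex_append_left_iff [IsIrrefl α r] (z x y : List α) :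
    Lex r (z ++ x) (z ++ y) ↔ Lex r x y := by
  induction z with
  | nil => rfl
  | cons a z ih => simpa [List.cons_append, List.lex_cons_iff] using ih

theorem lex_append_same_length {x y : List α} (h : Lex r x y) :
    ∀ (v : List α), x.length = y.length → Lex r (x ++ v) (y ++ v) := by
  induction h with
  | nil => intro v hl; simp at hl
  | cons h ih => intro v hl; exact Lex.cons (ih v (by simpa using hl))
  | rel h => intro v _; exact Lex.rel h

end LexMore

/-- Lyndon word with respect to a strict order `r`. -/
def IsLyndonW (r : α → α → Prop) (u : List α) : Prop :=
  u ≠ [] ∧ ∀ k, 0 < k → k < u.length → Lex r u (u.drop k)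

section Lyndon
variable {r : α → α → Prop}

/-- the first letter of a Lyndon word is `r`-below the letter at the first difference -/
theorem lyndon_first_diff (hu : IsLyndonW r u) {m : ℕ} (hm : 0 < m) (hml : m < u.length)
    (hconst : ∀ t, t < m → u[t]? = u[0]?) (hdiff : u[m]? ≠ u[0]?) :
    ∀ a b, u[0]? = some a → u[m]? = some b → r a b := by
  intro a b ha hb
  have hlex := hu.2 m hm hml
  rcases lex_iff.mp hlex with ⟨hpre, -⟩ | ⟨d, a', b', he, h1, h2, hr⟩
  · have := hpre.length_le
    rw [List.length_drop] at this
    omega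
  · cases d with
    | zero =>
      rw [List.getElem?_drop] at h2
      rw [ha] at h1
      rw [Nat.add_zero] at h2
      rw [hb] at h2
      injection h1 with h1; injection h2 with h2
      rw [h1, h2]; exact hr
    | succ d =>
      have h0 := he 0 (by omega)
      rw [List.getElem?_drop, Nat.add_zero] at h0
      exact absurd h0.symm hdiff

/-- first letter of a Lyndon word of length ≥ 2 is `r`-below its last letter -/
theorem lyndon_first_last (hu : IsLyndonW r u) (hl : 2 ≤ u.length) :
    ∀ a b, u[0]? = some a → u[u.length - 1]? = some b → r a b := by
  intro a b ha hb
  have hlex := hu.2 (u.length - 1) (by omega) (by omega)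
  rcases lex_iff.mp hlex with ⟨hpre, -⟩ | ⟨d, a', b', he, h1, h2, hr⟩
  · have := hpre.length_le
    rw [List.length_drop] at this
    omega
  · have hd : d = 0 := by
      by_contra hd
      have : (u.drop (u.length - 1))[d]? = none := by
        rw [List.getElem?_eq_none]
        rw [List.length_drop]; omega
      rw [this] at h2; exact nomatch h2
    subst hd
    rw [List.getElem?_drop, Nat.add_zero, hb] at h2
    rw [ha] at h1
    injection h1 with h1; injection h2 with h2
    rw [h1, h2]; exact hr

end Lyndon

/-- `z^e` as a list -/
def npowL (z : List α) : ℕ → List α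
  | 0 => []
  | e + 1 => z ++ npowL z e

theorem npowL_length (z : List α) : ∀ e, (npowL z e).length = e * z.length
  | 0 => by simp [npowL]
  | e + 1 => by rw [npowL, List.length_append, npowL_length z e]; ring

theorem npowL_add (z : List α) (a b : ℕ) : npowL z (a + b) = npowL z a ++ npowL z b := by
  induction a with
  | zero => simp [npowL]
  | succ a ih => rw [show a + 1 + b = (a + b) + 1 by omega, npowL, npowL, ih, List.append_assoc]

theorem npowL_succ' (z : List α) (e : ℕ) : npowL z (e + 1) = npowL z e ++ z := by
  rw [npowL_add, npowL, npowL]; simp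

theorem npowL_one (z : List α) : npowL z 1 = z := by simp [npowL]

theorem npowL_period (z : List α) (e d : ℕ) (hd : d + z.length < (npowL z e).length) :
    (npowL z e)[d]? = (npowL z e)[d + z.length]? := by
  cases e with
  | zero => rw [npowL_length] at hd; omega
  | succ e =>
    have hlen : (npowL z e).length = e * z.length := npowL_length z e
    have hd' : d < (npowL z e).length := by
      rw [npowL_length] at hd ⊢; rw [Nat.succ_mul] at hd; omega
    have h1 : (npowL z (e + 1))[d + z.length]? = (npowL z e)[d]? := by
      rw [npowL, List.getElem?_append_right (by omega)]
      congr 1; omega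
    have h2 : (npowL z (e + 1))[d]? = (npowL z e)[d]? := by
      rw [npowL_succ', List.getElem?_append, if_pos hd']
    rw [h1, h2]

theorem comm_append : ∀ (n : ℕ) (u v : List α), u.length + v.length ≤ n →
    u ++ v = v ++ u → ∃ (z : List α) (a b : ℕ), u = npowL z a ∧ v = npowL z b := by
  intro n
  induction n with
  | zero =>
    intro u v hl _
    have : u = [] := by cases u <;> simp_all
    have : v = [] := by cases v <;> simp_all
    exact ⟨[], 0, 0, by simp_all [npowL]⟩
  | succ n ih =>
    intro u v hl hc
    rcases eq_or_ne u [] with rfl | hu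
    · exact ⟨v, 0, 1, rfl, (npowL_one v).symm⟩
    rcases eq_or_ne v [] with rfl | hv
    · exact ⟨u, 1, 0, (npowL_one u).symm, rfl⟩
    rcases Nat.le_total u.length v.length with hle | hle
    · have hpre : v = u ++ v.drop u.length := by
        have h1 : (u ++ v).take u.length = u := by
          rw [List.take_append_of_le_length (by omega), List.take_length]
        have h2 : (v ++ u).take u.length = v.take u.length := by
          rw [List.take_append_of_le_length hle]
        have h3 : u = v.take u.length := by
          conv_lhs => rw [← h1, hc]
          exact h2
        have h4 := List.take_append_drop u.length v
        rw [← h3] at h4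
        exact h4.symm
      set v' := v.drop u.length with hv'
      have hc' : u ++ v' = v' ++ u := by
        have : u ++ (u ++ v') = (u ++ v') ++ u := by rw [← hpre]; exact hc
        rw [List.append_assoc] at this
        exact List.append_cancel_left this
      have hlen : u.length + v'.length ≤ n := by
        have hul : 1 ≤ u.length := List.length_pos_iff.mpr hu
        have : v'.length = v.length - u.length := by rw [hv', List.length_drop]
        omega
      obtain ⟨z, a, b, hza, hzb⟩ := ih u v' hlen hc'
      exact ⟨z, a, a + b, hza, by rw [hpre, npowL_add, hza, hzb]⟩
    · have hpre : u = v ++ u.drop v.length := by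
        have h1 : (v ++ u).take v.length = v := by
          rw [List.take_append_of_le_length (by omega), List.take_length]
        have h2 : (u ++ v).take v.length = u.take v.length := by
          rw [List.take_append_of_le_length hle]
        have h3 : v = u.take v.length := by
          conv_lhs => rw [← h1, ← hc]
          exact h2
        have h4 := List.take_append_drop v.length u
        rw [← h3] at h4
        exact h4.symm
      set u' := u.drop v.length with hu'
      have hc' : v ++ u' = u' ++ v := by
        have : v ++ (v ++ u') = (v ++ u') ++ v := by rw [← hpre]; exact hc.symm
        rw [List.append_assoc] at this
        exact List.append_cancel_left this
      have hlen : v.length + u'.length ≤ n := by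
        have hvl : 1 ≤ v.length := List.length_pos_iff.mpr hv
        have : u'.length = u.length - v.length := by rw [hu', List.length_drop]
        omega
      obtain ⟨z, a, b, hza, hzb⟩ := ih v u' hlen hc'
      exact ⟨z, a + b, a, by rw [hpre, npowL_add, hza, hzb], hza⟩

theorem factor_getElem?' (w : List α) (a b k : ℕ) :
    (factor w a b)[k]? = if k < b - a + 1 then w[a + k]? else none := by
  unfold factor
  rw [List.getElem?_take, List.getElem?_drop]

theorem factor_append (w : List α) {a b c : ℕ} (h1 : a ≤ b) (h2 : b < c)
    (h3 : c < w.length) :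
    factor w a c = factor w a b ++ factor w (b + 1) c := by
  apply List.ext_getElem?
  intro k
  have hlen : (factor w a b).length = b - a + 1 := factor_length w a b h1 (by omega)
  rw [List.getElem?_append, hlen, factor_getElem?', factor_getElem?', factor_getElem?']
  rcases Nat.lt_or_ge k (b - a + 1) with hk | hk
  · rw [if_pos hk, if_pos hk, if_pos (show k < c - a + 1 by omega)]
  · rw [if_neg (show ¬ k < b - a + 1 by omega)]
    rcases Nat.lt_or_ge k (c - a + 1) with hk2 | hk2
    · rw [if_pos hk2, if_pos (show k - (b - a + 1) < c - (b + 1) + 1 by omega)]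
      congr 1; omega
    · rw [if_neg (show ¬ k < c - a + 1 by omega),
        if_neg (show ¬ k - (b - a + 1) < c - (b + 1) + 1 by omega)]

theorem factor_drop (w : List α) {a c : ℕ} (m : ℕ) (hm : a + m ≤ c) :
    (factor w a c).drop m = factor w (a + m) c := by
  apply List.ext_getElem?
  intro k
  rw [List.getElem?_drop, factor_getElem?', factor_getElem?']
  split_ifs with h1 h2 h2
  · congr 1; omega
  · omega
  · omega
  · rfl

theorem exists_rep (p s t : ℕ) (hp : 0 < p) :
    ∃ t', s ≤ t' ∧ t' < s + p ∧ t' % p = t % p := by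
  have hsp : s ≤ t + p * s := le_trans (Nat.le_mul_of_pos_left s hp) (Nat.le_add_left _ _)
  refine ⟨s + (t + p * s - s) % p, Nat.le_add_right _ _,
    by have := Nat.mod_lt (t + p * s - s) hp; omega, ?_⟩
  have h1 : (s + (t + p * s - s) % p) % p = (s + (t + p * s - s)) % p := by
    rw [Nat.add_mod, Nat.mod_mod_of_dvd _ dvd_rfl, ← Nat.add_mod]
  have h2 : s + (t + p * s - s) = t + p * s := by omega
  rw [h1, h2, Nat.add_mul_mod_self_left]

theorem period_transfer (w : List α) {i j p q s : ℕ} (hp : 0 < p) (hq : 0 < q)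
    (hqp : q ∣ p) (hs : i ≤ s) (hsj : s + p - 1 ≤ j)
    (hper : PeriodOn w i j p) (hwin : PeriodOn w s (s + p - 1) q) :
    PeriodOn w i j q := by
  intro t ht htq
  obtain ⟨t', ht'1, ht'2, ht'3⟩ := exists_rep p s t hp
  obtain ⟨t'', ht''1, ht''2, ht''3⟩ := exists_rep p s (t + q) hp
  have e1 : w[t]? = w[t']? :=
    periodOn_eq_of_mod w hp hper ht (by omega) (by omega) (by omega) ht'3.symm
  have e2 : w[t + q]? = w[t'']? :=
    periodOn_eq_of_mod w hp hper (by omega) (by omega) (by omega) (by omega) ht''3.symm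
  have e3 : w[t']? = w[t'']? := by
    apply periodOn_eq_of_mod w hq hwin ht'1 (by omega) ht''1 (by omega)
    have m1 : t' ≡ t [MOD q] := Nat.ModEq.of_dvd hqp ht'3
    have m2 : t'' ≡ t + q [MOD q] := Nat.ModEq.of_dvd hqp ht''3
    have m3 : t + q ≡ t [MOD q] := Nat.add_mod_right t q
    exact m1.trans (m3.symm.trans m2.symm)
  rw [e1, e3, ← e2]

theorem exists_lex_min {r : α → α → Prop} [IsStrictTotalOrder α r]
    (s : Finset ℕ) (hs : s.Nonempty) (f : ℕ → List α) :
    ∃ b ∈ s, ∀ c ∈ s, ¬ Lex r (f c) (f b) := by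
  classical
  haveI : IsStrictTotalOrder (List α) (Lex r) := { isStrictWeakOrder_of_isOrderConnected with }
  induction s using Finset.induction_on with
  | empty => simp at hs
  | @insert a t ha ih =>
    rcases t.eq_empty_or_nonempty with rfl | ht
    · refine ⟨a, by simp, ?_⟩
      intro c hc
      simp only [Finset.mem_insert, Finset.notMem_empty, or_false] at hc
      subst hc
      exact irrefl_of (Lex r) (f c)
    · obtain ⟨b, hb, hmin⟩ := ih ht
      rcases trichotomous_of (Lex r) (f a) (f b) with hab | hab | hab
      · refine ⟨a, Finset.mem_insert_self a t, ?_⟩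
        intro c hc
        rcases Finset.mem_insert.mp hc with rfl | hc
        · exact irrefl_of (Lex r) (f c)
        · intro hca
          exact hmin c hc (trans_of (Lex r) hca hab)
      · refine ⟨b, Finset.mem_insert_of_mem hb, ?_⟩
        intro c hc
        rcases Finset.mem_insert.mp hc with rfl | hc
        · rw [hab]; exact irrefl_of (Lex r) (f b)
        · exact hmin c hc
      · refine ⟨b, Finset.mem_insert_of_mem hb, ?_⟩
        intro c hc
        rcases Finset.mem_insert.mp hc with rfl | hc
        · exact asymm_of (Lex r) hab
        · exact hmin c hc

/-- rotated window words agree when start positions are congruent mod p -/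
theorem window_congr (w : List α) {i j p s1 s2 : ℕ} (hp : 0 < p)
    (hper : PeriodOn w i j p) (hj : j < w.length)
    (hs1 : i ≤ s1) (hs1j : s1 + p - 1 ≤ j) (hs2 : i ≤ s2) (hs2j : s2 + p - 1 ≤ j)
    (hmod : s1 % p = s2 % p) :
    factor w s1 (s1 + p - 1) = factor w s2 (s2 + p - 1) := by
  apply List.ext_getElem?
  intro k
  rw [factor_getElem?', factor_getElem?']
  split_ifs with h1 h2 h2
  · exact periodOn_eq_of_mod w hp hper (by omega) (by omega) (by omega) (by omega)
      (Nat.ModEq.add_right k hmod)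
  · omega
  · omega
  · rfl

/-- the rotation of a window word is again a window word -/
theorem rot_word (w : List α) {i j p s m s'' : ℕ} (hp : 0 < p)
    (hper : PeriodOn w i j p) (hj : j < w.length) (h2p : i + 2 * p ≤ j + 1)
    (hs : i < s) (hs2 : s ≤ i + p) (hm : 0 < m) (hmp : m < p)
    (hs'' : i < s'') (hs''2 : s'' ≤ i + p) (hmod : s'' % p = (s + m) % p) :
    factor w s'' (s'' + p - 1) =
      factor w (s + m) (s + p - 1) ++ factor w s (s + m - 1) := by
  apply List.ext_getElem?
  intro k
  have hl1 : (factor w (s + m) (s + p - 1)).length = p - m :=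
    by rw [factor_length w _ _ (by omega) (by omega)]; omega
  have hl2 : (factor w s (s + m - 1)).length = m :=
    by rw [factor_length w _ _ (by omega) (by omega)]; omega
  rw [List.getElem?_append, hl1, factor_getElem?', factor_getElem?', factor_getElem?']
  rcases Nat.lt_or_ge k (p - m) with hk | hk
  · rw [if_pos hk, if_pos (show k < s + p - 1 - (s + m) + 1 by omega),
      if_pos (show k < s'' + p - 1 - s'' + 1 by omega)]
    apply periodOn_eq_of_mod w hp hper (by omega) (by omega) (by omega) (by omega)
    exact Nat.ModEq.add_right k hmod
  · rw [if_neg (show ¬ k < p - m by omega)]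
    rcases Nat.lt_or_ge k p with hk2 | hk2
    · rw [if_pos (show k - (p - m) < s + m - 1 - s + 1 by omega),
        if_pos (show k < s'' + p - 1 - s'' + 1 by omega)]
      apply periodOn_eq_of_mod w hp hper (by omega) (by omega) (by omega) (by omega)
      have e1 : s'' + k ≡ s + m + k [MOD p] := Nat.ModEq.add_right k hmod
      have e2 : s + m + k = s + (k - (p - m)) + p := by omega
      have e3 : s + m + k ≡ s + (k - (p - m)) [MOD p] := by
        rw [e2]; exact Nat.add_mod_right _ p
      exact e1.trans e3
    · rw [if_neg (show ¬ k < s'' + p - 1 - s'' + 1 by omega),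
        if_neg (show ¬ k - (p - m) < s + m - 1 - s + 1 by omega)]

/-- a power decomposition of a window gives a period of the window in `w` -/
theorem window_period_of_pow (w : List α) {s p q : ℕ} {z : List α} {e : ℕ}
    (hW : factor w s (s + p - 1) = npowL z e) (hq : z.length = q)
    (hlen : (factor w s (s + p - 1)).length = p) (hp0 : 0 < p) :
    PeriodOn w s (s + p - 1) q := by
  intro t ht htq
  have h1 : w[t]? = (factor w s (s + p - 1))[t - s]? := by
    rw [factor_getElem?', if_pos (by omega)]
    congr 1; omega
  have h2 : w[t + q]? = (factor w s (s + p - 1))[t - s + q]? := by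
    rw [factor_getElem?', if_pos (by omega)]
    congr 1; omega
  rw [h1, h2, hW]
  rw [← hq]
  apply npowL_period
  rw [← hW, hlen]
  omega

theorem exists_lyndon_occurrence {r : α → α → Prop} [IsStrictTotalOrder α r]
    (w : List α) {i j p : ℕ}
    (hj : j < w.length) (hp1 : 1 ≤ p) (h2p : i + 2 * p ≤ j + 1)
    (hper : PeriodOn w i j p)
    (hmin : ∀ q, 1 ≤ q → q < p → ¬ PeriodOn w i j q) :
    ∃ k, i < k ∧ k + p - 1 ≤ j ∧ IsLyndonW r (factor w k (k + p - 1)) := by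
  obtain ⟨s, hsmem, hsmin⟩ := exists_lex_min (r := r) (Finset.Icc (i+1) (i+p))
    ⟨i+1, Finset.mem_Icc.mpr (by omega)⟩ (fun s => factor w s (s + p - 1))
  simp only [Finset.mem_Icc] at hsmem
  have hs1 : i < s := by omega
  have hs2 : s ≤ i + p := by omega
  have hsj : s + p - 1 ≤ j := by omega
  have hWlen : (factor w s (s + p - 1)).length = p := by
    rw [factor_length w _ _ (by omega) (by omega)]; omega
  refine ⟨s, hs1, hsj, ?_, ?_⟩
  · intro h
    rw [h] at hWlen
    simp at hWlen
    omega
  · intro m hm hml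
    rw [hWlen] at hml
    have hdrop : (factor w s (s + p - 1)).drop m = factor w (s + m) (s + p - 1) :=
      factor_drop w m (by omega)
    rw [hdrop]
    have hvlen : (factor w (s + m) (s + p - 1)).length = p - m := by
      rw [factor_length w _ _ (by omega) (by omega)]; omega
    rcases trichotomous_of (Lex r) (factor w s (s+p-1)) (factor w (s+m) (s+p-1))
      with h | h | h
    · exact h
    · exfalso
      have := congrArg List.length h
      rw [hWlen, hvlen] at this; omega
    · exfalso
      set s'' := if s + m ≤ i + p then s + m else s + m - p with hs''def
      have hs''1 : i < s'' := by rw [hs''def]; split_ifs <;> omega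
      have hs''2 : s'' ≤ i + p := by rw [hs''def]; split_ifs <;> omega
      have hs''mod : s'' % p = (s + m) % p := by
        rw [hs''def]; split_ifs with hcase
        · rfl
        · conv_rhs => rw [show s + m = (s + m - p) + p by omega]
          exact (Nat.add_mod_right _ p).symm
      have hrot : factor w s'' (s'' + p - 1) =
          factor w (s + m) (s + p - 1) ++ factor w s (s + m - 1) :=
        rot_word w (by omega) hper hj h2p hs1 hs2 hm hml hs''1 hs''2 hs''mod
      have hs''memI : s'' ∈ Finset.Icc (i+1) (i+p) := Finset.mem_Icc.mpr ⟨by omega, hs''2⟩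
      rcases lex_iff.mp h with ⟨hpre, hne⟩ | ⟨d, a, b, he, h1, h2, hrab⟩
      · -- prefix case
        obtain ⟨tl, htl⟩ := hpre
        have htl' : tl = factor w (s + (p - m)) (s + p - 1) := by
          have hdrop2 : (factor w s (s + p - 1)).drop (p - m) =
              factor w (s + (p - m)) (s + p - 1) := factor_drop w (p - m) (by omega)
          rw [← hdrop2, ← htl, ← hvlen, List.drop_left]
        have happ : factor w s (s + p - 1) =
            factor w s (s + (p - m) - 1) ++ factor w (s + (p - m)) (s + p - 1) :=
          by
          have := factor_append w (a := s) (b := s + (p - m) - 1) (c := s + p - 1)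
            (by omega) (by omega) (by omega)
          rwa [show s + (p - m) - 1 + 1 = s + (p - m) by omega] at this
        have hv_take : factor w s (s + (p - m) - 1) = factor w (s + m) (s + p - 1) := by
          have h5 : factor w (s + m) (s + p - 1) ++ tl =
              factor w s (s + (p - m) - 1) ++ tl := by
            rw [htl, happ, htl']
          exact (List.append_cancel_right h5).symm
        set s3 := if s + (p - m) ≤ i + p then s + (p - m) else s + (p - m) - p with hs3def
        have hs31 : i < s3 := by rw [hs3def]; split_ifs <;> omega
        have hs32 : s3 ≤ i + p := by rw [hs3def]; split_ifs <;> omega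
        have hs3mod : s3 % p = (s + (p - m)) % p := by
          rw [hs3def]; split_ifs with hcase
          · rfl
          · conv_rhs => rw [show s + (p - m) = (s + (p - m) - p) + p by omega]
            exact (Nat.add_mod_right _ p).symm
        have hrot3 : factor w s3 (s3 + p - 1) =
            factor w (s + (p - m)) (s + p - 1) ++ factor w s (s + (p - m) - 1) :=
          rot_word w (by omega) hper hj h2p hs1 hs2 (by omega) (by omega) hs31 hs32 hs3mod
        have hs3memI : s3 ∈ Finset.Icc (i+1) (i+p) := Finset.mem_Icc.mpr ⟨by omega, hs32⟩
        have happ2 : factor w s (s + p - 1) =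
            factor w s (s + m - 1) ++ factor w (s + m) (s + p - 1) := by
          have := factor_append w (a := s) (b := s + m - 1) (c := s + p - 1)
            (by omega) (by omega) (by omega)
          rwa [show s + m - 1 + 1 = s + m by omega] at this
        have hulen : (factor w s (s + m - 1)).length = m := by
          rw [factor_length w _ _ (by omega) (by omega)]; omega
        have htllen : tl.length = m := by
          rw [htl', factor_length w _ _ (by omega) (by omega)]; omega
        rcases trichotomous_of (Lex r) (factor w s (s + m - 1)) tl with h4 | h4 | h4
        · -- Lex u tl contradicts minimality at s''
          apply hsmin s'' hs''memI
          show Lex r (factor w s'' (s'' + p - 1)) (factor w s (s + p - 1))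
          rw [hrot, ← htl]
          exact (lex_append_left_iff _ _ _).mpr h4
        · -- u = tl : commutation
          have hcomm : factor w s (s + m - 1) ++ factor w (s + m) (s + p - 1) =
              factor w (s + m) (s + p - 1) ++ factor w s (s + m - 1) := by
            conv_lhs => rw [← happ2, htl.symm]
            rw [h4]
          obtain ⟨z, ea, eb, hza, hzb⟩ := comm_append
            ((factor w s (s + m - 1)).length + (factor w (s + m) (s + p - 1)).length)
            _ _ le_rfl hcomm
          have hql1 : m = ea * z.length := by rw [← hulen, hza, npowL_length]
          have hql2 : p - m = eb * z.length := by rw [← hvlen, hzb, npowL_length]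
          have hq1 : 1 ≤ z.length := by
            rcases Nat.eq_zero_or_pos z.length with h0 | h0
            · rw [h0, Nat.mul_zero] at hql1; omega
            · omega
          have hea : 1 ≤ ea := by
            rcases Nat.eq_zero_or_pos ea with h0 | h0
            · rw [h0, Nat.zero_mul] at hql1; omega
            · omega
          have hqm : z.length ≤ m := by
            calc z.length ≤ ea * z.length := Nat.le_mul_of_pos_left _ hea
            _ = m := hql1.symm
          have hWpow : factor w s (s + p - 1) = npowL z (ea + eb) := by
            rw [happ2, hza, hzb, ← npowL_add]
          have hdvd : z.length ∣ p :=
            ⟨ea + eb, by rw [Nat.mul_comm, ← npowL_length z, ← hWpow]; exact hWlen.symm⟩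
          have hwin := window_period_of_pow w hWpow rfl hWlen (by omega)
          have htrans := period_transfer w (show 0 < p by omega) hq1 hdvd
            (show i ≤ s by omega) hsj hper hwin
          exact hmin z.length hq1 (by omega) htrans
        · -- Lex tl u contradicts minimality at s3
          apply hsmin s3 hs3memI
          show Lex r (factor w s3 (s3 + p - 1)) (factor w s (s + p - 1))
          rw [hrot3, hv_take, happ2, ← htl']
          exact lex_append_same_length h4 _ (by rw [htllen, hulen])
      · -- first-difference case: build Lex (W s'') (W s)
        apply hsmin s'' hs''memI
        show Lex r (factor w s'' (s'' + p - 1)) (factor w s (s + p - 1))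
        rw [hrot]
        have hd : d < p - m := by
          by_contra hdc
          push_neg at hdc
          rw [List.getElem?_eq_none (by rw [hvlen]; omega)] at h1
          cases h1
        refine lex_of_diff (d := d) (fun t htd => ?_) ?_ h2 hrab
        · rw [List.getElem?_append, if_pos (by rw [hvlen]; omega)]
          exact he t htd
        · rw [List.getElem?_append, if_pos (by rw [hvlen]; omega)]
          exact h1

section MainSec
variable [LinearOrder α]

theorem flip_sto : IsStrictTotalOrder α (fun x y : α => y < x) where
  trichotomous a b := by
    rcases lt_trichotomy a b with h | h | h
    · exact fun _ h2 => absurd h h2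
    · exact fun _ _ => h
    · exact fun h1 _ => absurd h h1
  irrefl a h := lt_irrefl a h
  trans a b c h1 h2 := lt_trans h2 h1

/-- the order associated to a run -/
noncomputable def runOrd (w : List α) (i j : ℕ) : α → α → Prop :=
  match w[j+1]?, w[j + 1 - minPeriod (factor w i j)]? with
  | some a, some b => if a < b then (· < · : α → α → Prop) else (fun x y => y < x)
  | _, _ => (· < ·)

theorem runOrd_cases (w : List α) (i j : ℕ) :
    runOrd w i j = (· < · : α → α → Prop) ∨ runOrd w i j = (fun x y : α => y < x) := by
  unfold runOrd
  rcases w[j+1]? with _ | a <;> rcases w[j + 1 - minPeriod (factor w i j)]? with _ | b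
  · exact Or.inl rfl
  · exact Or.inl rfl
  · exact Or.inl rfl
  · dsimp only
    split_ifs
    · exact Or.inl rfl
    · exact Or.inr rfl

theorem runOrd_sto (w : List α) (i j : ℕ) : IsStrictTotalOrder α (runOrd w i j) := by
  rcases runOrd_cases w i j with h | h <;> rw [h]
  · infer_instance
  · exact flip_sto

theorem runOrd_spec (w : List α) {i j : ℕ} {a b : α}
    (ha : w[j+1]? = some a) (hb : w[j + 1 - minPeriod (factor w i j)]? = some b)
    (hab : a ≠ b) : runOrd w i j a b := by
  unfold runOrd
  rw [ha, hb]
  dsimp only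
  split_ifs with h
  · exact h
  · exact lt_of_le_of_ne (not_lt.mp h) (Ne.symm hab)

theorem sto_asymm {r : α → α → Prop} (h : IsStrictTotalOrder α r) : IsAsymm α r :=
  ⟨fun a b h1 h2 => absurd (h.trans a b a h1 h2) (h.irrefl a)⟩

/-- Lemma A: prefixes of the suffix at an occurrence position that are longer than the
period are not Lyndon with respect to the run's order. -/
theorem not_lyndon_long (w : List α) {i j k q : ℕ} (hrun : IsRun w i j)
    (hk : i < k) (hkp : k + minPeriod (factor w i j) - 1 ≤ j)
    (hq : minPeriod (factor w i j) < q) (hkq : k + q - 1 < w.length) :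
    ¬ IsLyndonW (runOrd w i j) (factor w k (k + q - 1)) := by
  haveI hsto := runOrd_sto w i j
  haveI := sto_asymm hsto
  set p := minPeriod (factor w i j) with hpdef
  have hp1 : 1 ≤ p := run_pos w hrun
  have hper := run_period w hrun
  have hjn : j < w.length := hrun.2.1
  intro hLyn
  have hulen : (factor w k (k + q - 1)).length = q := by
    rw [factor_length w _ _ (by omega) hkq]; omega
  have hdrop : (factor w k (k + q - 1)).drop p = factor w (k + p) (k + q - 1) :=
    factor_drop w p (by omega)
  have hlex := hLyn.2 p (by omega) (by rw [hulen]; omega)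
  rw [hdrop] at hlex
  rcases le_or_gt q (j - k + 1) with hcase | hcase
  · -- entirely inside the run
    have hpref : factor w (k + p) (k + q - 1) = factor w k (k + (q - p) - 1) := by
      apply List.ext_getElem?
      intro t
      rw [factor_getElem?', factor_getElem?']
      split_ifs with h1 h2 h2
      · rw [show k + p + t = (k + t) + p by omega]
        exact (hper (k + t) (by omega) (by omega)).symm
      · omega
      · omega
      · rfl
    have happ : factor w k (k + q - 1) =
        factor w k (k + (q - p) - 1) ++ factor w (k + (q - p)) (k + q - 1) := by
      have := factor_append w (a := k) (b := k + (q - p) - 1) (c := k + q - 1)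
        (by omega) (by omega) hkq
      rwa [show k + (q - p) - 1 + 1 = k + (q - p) by omega] at this
    have hne : factor w k (k + (q - p) - 1) ≠ factor w k (k + q - 1) := by
      intro he
      have := congrArg List.length he
      rw [hulen, factor_length w _ _ (by omega) (by omega)] at this
      omega
    have : Lex (runOrd w i j) (factor w k (k + (q - p) - 1)) (factor w k (k + q - 1)) :=
      lex_of_prefix ⟨_, happ.symm⟩ hne
    rw [← hpref] at this
    exact lex_asymm hlex this
  · -- sticks out beyond the run
    have hj1 : j + 1 < w.length := by omega
    have hd := run_right w hrun hj1
    have ha : w[j+1]? = some (w[j+1]'hj1) := List.getElem?_eq_getElem hj1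
    have hb : w[j+1-p]? = some (w[j+1-p]'(by omega)) := List.getElem?_eq_getElem (by omega)
    have hlex2 : Lex (runOrd w i j) (factor w (k + p) (k + q - 1)) (factor w k (k + q - 1)) := by
      refine lex_of_diff (d := j + 1 - (k + p)) (a := w[j+1]'hj1) (b := w[j+1-p]'(by omega)) (fun t htd => ?_) ?_ ?_ ?_
      · rw [factor_getElem?', factor_getElem?', if_pos (by omega), if_pos (by omega)]
        rw [show k + p + t = (k + t) + p by omega]
        exact (hper (k + t) (by omega) (by omega)).symm
      · rw [factor_getElem?', if_pos (by omega)]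
        rw [show k + p + (j + 1 - (k + p)) = j + 1 by omega]
        exact ha
      · rw [factor_getElem?', if_pos (by omega)]
        rw [show k + (j + 1 - (k + p)) = j + 1 - p by omega]
        exact hb
      · apply runOrd_spec w ha hb
        intro hab
        apply hd
        rw [ha, hb, hab]
    exact lex_asymm hlex hlex2

end MainSec

/-- two runs with the same minimal period sharing an occurrence position coincide -/
theorem runs_eq_of_period_eq (w : List α) {i j i' j' k : ℕ}
    (h : IsRun w i j) (h' : IsRun w i' j')
    (hpp : minPeriod (factor w i j) = minPeriod (factor w i' j'))
    (hki : i < k) (hkj : k + minPeriod (factor w i j) - 1 ≤ j)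
    (hki' : i' < k) (hkj' : k + minPeriod (factor w i j) - 1 ≤ j') :
    i = i' ∧ j = j' := by
  set p := minPeriod (factor w i j) with hpdef
  have hp1 : 1 ≤ p := run_pos w h
  have hjn : j < w.length := h.2.1
  have hjn' : j' < w.length := h'.2.1
  have hper := run_period w h
  have hper' := run_period w h'
  rw [← hpp] at hper'
  have hii : i = i' := by
    by_contra hne
    rcases Nat.lt_or_ge i i' with hlt | hge
    · have e := hper (i' - 1) (by omega) (by omega)
      have hL := run_left w h' (by omega)
      rw [← hpp] at hL
      exact hL (by rw [show i' - 1 + p = i' - 1 + p from rfl] at e; exact e)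
    · have hlt : i' < i := by omega
      have e := hper' (i - 1) (by omega) (by omega)
      have hL := run_left w h (by omega)
      exact hL e
  have hjj : j = j' := by
    by_contra hne
    rcases Nat.lt_or_ge j j' with hlt | hge
    · have e := hper' (j + 1 - p) (by omega) (by omega)
      have hR := run_right w h (by omega)
      rw [show j + 1 - p + p = j + 1 by omega] at e
      exact hR e.symm
    · have hlt : j' < j := by omega
      have e := hper (j' + 1 - p) (by omega) (by omega)
      have hR := run_right w h' (by omega)
      rw [← hpp] at hR
      rw [show j' + 1 - p + p = j' + 1 by omega] at e
      exact hR e.symm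
  exact ⟨hii, hjj⟩

/-- Key property: `k` is an occurrence of the `runOrd`-Lyndon root of the run, after its start. -/
def KeyProp [LinearOrder α] (w : List α) (i j k : ℕ) : Prop :=
  i < k ∧ k + minPeriod (factor w i j) - 1 ≤ j ∧
    IsLyndonW (runOrd w i j) (factor w k (k + minPeriod (factor w i j) - 1))

theorem key_not_lt [LinearOrder α] (w : List α) {i j i' j' k : ℕ}
    (h : IsRun w i j) (h' : IsRun w i' j')
    (hk : KeyProp w i j k) (hk' : KeyProp w i' j' k)
    (hplt : minPeriod (factor w i j) < minPeriod (factor w i' j')) : False := by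
  haveI hsto := runOrd_sto w i j
  haveI hsto' := runOrd_sto w i' j'
  haveI := sto_asymm hsto
  haveI := sto_asymm hsto'
  set p := minPeriod (factor w i j) with hpdef
  set p' := minPeriod (factor w i' j') with hpdef'
  have hp1 : 1 ≤ p := run_pos w h
  have hp1' : 1 ≤ p' := run_pos w h'
  have hper := run_period w h
  have hper' := run_period w h'
  have hjn : j < w.length := h.2.1
  have hjn' : j' < w.length := h'.2.1
  obtain ⟨hki, hkj, hLyn⟩ := hk
  obtain ⟨hki', hkj', hLyn'⟩ := hk'
  rw [← hpdef] at hkj hLyn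
  rw [← hpdef'] at hkj' hLyn'
  -- the orders must differ
  have hRne : runOrd w i j ≠ runOrd w i' j' := by
    intro he
    apply not_lyndon_long w h hki hkj hplt (by omega)
    rw [he]
    exact hLyn'
  -- hence they are flips of each other
  have hflip : ∀ x y : α, runOrd w i' j' x y → runOrd w i j y x := by
    rcases runOrd_cases w i j with h1 | h1 <;> rcases runOrd_cases w i' j' with h2 | h2
    · rw [h1, h2] at hRne; exact absurd rfl hRne
    · rw [h1, h2]; exact fun x y hxy => hxy
    · rw [h1, h2]; exact fun x y hxy => hxy
    · rw [h1, h2] at hRne; exact absurd rfl hRne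
  have hkn : k < w.length := by omega
  have hkpn' : k + p' - 1 < w.length := by omega
  have hlamlen' : (factor w k (k + p' - 1)).length = p' := by
    rw [factor_length w _ _ (by omega) (by omega)]; omega
  rcases Nat.lt_or_ge p 2 with hp2 | hp2
  · -- p = 1
    have hp1e : p = 1 := by omega
    have e1 : w[k - 1]? = w[k]? := by
      have := hper (k - 1) (by omega) (by omega)
      rwa [show k - 1 + p = k by omega] at this
    have e2 : w[k - 1]? = w[k + p' - 1]? := by
      have := hper' (k - 1) (by omega) (by omega)
      rwa [show k - 1 + p' = k + p' - 1 by omega] at this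
    have hfl := lyndon_first_last hLyn' (by rw [hlamlen']; omega)
      (w[k]'hkn) (w[k + p' - 1]'hkpn')
      (by rw [factor_getElem?', if_pos (by omega), Nat.add_zero]
          exact List.getElem?_eq_getElem hkn)
      (by rw [factor_getElem?', if_pos (by omega), hlamlen']
          rw [show k + (p' - 1) = k + p' - 1 by omega]
          exact List.getElem?_eq_getElem hkpn')
    have hle : w[k + p' - 1]'hkpn' = w[k]'hkn := by
      have e3 : w[k + p' - 1]? = w[k]? := by rw [← e2, e1]
      rw [List.getElem?_eq_getElem hkpn', List.getElem?_eq_getElem hkn] at e3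
      injection e3
    rw [hle] at hfl
    exact absurd hfl (irrefl_of (runOrd w i' j') _)
  · -- p ≥ 2: both roots are Lyndon, use the first difference
    have hlamlen : (factor w k (k + p - 1)).length = p := by
      rw [factor_length w _ _ (by omega) (by omega)]; omega
    have hnc : ∃ t, 0 < t ∧ t < p ∧ w[k + t]? ≠ w[k]? := by
      by_contra hc
      push_neg at hc
      have hfl := lyndon_first_last hLyn (by rw [hlamlen]; omega)
        (w[k]'hkn) (w[k + p - 1]'(by omega))
        (by rw [factor_getElem?', if_pos (by omega), Nat.add_zero]
            exact List.getElem?_eq_getElem hkn)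
        (by rw [factor_getElem?', if_pos (by omega), hlamlen]
            rw [show k + (p - 1) = k + p - 1 by omega]
            exact List.getElem?_eq_getElem (by omega))
      have e3 : w[k + p - 1]? = w[k]? := by
        have := hc (p - 1) (by omega) (by omega)
        rwa [show k + (p - 1) = k + p - 1 by omega] at this
      have hle : w[k + p - 1]'(by omega) = w[k]'hkn := by
        rw [List.getElem?_eq_getElem (by omega), List.getElem?_eq_getElem hkn] at e3
        injection e3
      rw [hle] at hfl
      exact absurd hfl (irrefl_of (runOrd w i j) _)
    classical
    obtain ⟨hm0, hmp, hmne⟩ := Nat.find_spec hnc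
    set m := Nat.find hnc with hmdef
    have hmmin : ∀ t, 0 < t → t < m → w[k + t]? = w[k]? := by
      intro t ht0 htm
      by_contra hne
      exact Nat.find_min hnc htm ⟨ht0, by omega, hne⟩
    have hgel : ∀ t, t < p → (factor w k (k + p - 1))[t]? = w[k + t]? := fun t ht => by
      rw [factor_getElem?', if_pos (by omega)]
    have hgel' : ∀ t, t < p' → (factor w k (k + p' - 1))[t]? = w[k + t]? := fun t ht => by
      rw [factor_getElem?', if_pos (by omega)]
    have hkmn : k + m < w.length := by omega
    have hconst : ∀ t, t < m → (factor w k (k + p - 1))[t]? = (factor w k (k + p - 1))[0]? := by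
      intro t htm
      rw [hgel t (by omega), hgel 0 (by omega), Nat.add_zero]
      rcases Nat.eq_zero_or_pos t with rfl | ht0
      · rw [Nat.add_zero]
      · exact hmmin t ht0 htm
    have hdiff : (factor w k (k + p - 1))[m]? ≠ (factor w k (k + p - 1))[0]? := by
      rw [hgel m (by omega), hgel 0 (by omega), Nat.add_zero]
      exact hmne
    have hconst' : ∀ t, t < m →
        (factor w k (k + p' - 1))[t]? = (factor w k (k + p' - 1))[0]? := by
      intro t htm
      rw [hgel' t (by omega), hgel' 0 (by omega), Nat.add_zero]
      rcases Nat.eq_zero_or_pos t with rfl | ht0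
      · rw [Nat.add_zero]
      · exact hmmin t ht0 htm
    have hdiff' : (factor w k (k + p' - 1))[m]? ≠ (factor w k (k + p' - 1))[0]? := by
      rw [hgel' m (by omega), hgel' 0 (by omega), Nat.add_zero]
      exact hmne
    have hra := lyndon_first_diff hLyn hm0 (by rw [hlamlen]; exact hmp) hconst hdiff
      (w[k]'hkn) (w[k + m]'hkmn)
      (by rw [hgel 0 (by omega), Nat.add_zero]; exact List.getElem?_eq_getElem hkn)
      (by rw [hgel m (by omega)]; exact List.getElem?_eq_getElem hkmn)
    have hra' := lyndon_first_diff hLyn' hm0 (by rw [hlamlen']; omega) hconst' hdiff'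
      (w[k]'hkn) (w[k + m]'hkmn)
      (by rw [hgel' 0 (by omega), Nat.add_zero]; exact List.getElem?_eq_getElem hkn)
      (by rw [hgel' m (by omega)]; exact List.getElem?_eq_getElem hkmn)
    exact asymm_of (runOrd w i j) hra (hflip _ _ hra')

theorem key_unique [LinearOrder α] (w : List α) {i j i' j' k : ℕ}
    (h : IsRun w i j) (h' : IsRun w i' j')
    (hk : KeyProp w i j k) (hk' : KeyProp w i' j' k) : i = i' ∧ j = j' := by
  rcases lt_trichotomy (minPeriod (factor w i j)) (minPeriod (factor w i' j')) with hlt | heq | hlt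
  · exact (key_not_lt w h h' hk hk' hlt).elim
  · exact runs_eq_of_period_eq w h h' heq hk.1 hk.2.1 hk'.1 (by rw [heq]; exact hk'.2.1)
  · exact (key_not_lt w h' h hk' hk hlt).elim

theorem exists_key [LinearOrder α] (w : List α) {i j : ℕ} (h : IsRun w i j) :
    ∃ k, 1 ≤ k ∧ k ≤ w.length - 1 ∧ KeyProp w i j k := by
  haveI := runOrd_sto w i j
  have hij : i < j := h.1
  have hjn : j < w.length := h.2.1
  have h2p : 2 * minPeriod (factor w i j) ≤ j - i + 1 := h.2.2.1
  have hp1 : 1 ≤ minPeriod (factor w i j) := run_pos w h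
  obtain ⟨k, hk1, hk2, hk3⟩ := exists_lyndon_occurrence (r := runOrd w i j) w hjn hp1
    (by omega) (run_period w h)
    (fun q hq1 hqp hperq => by
      have := minPeriod_le _ q
        ((hasPeriodLen_factor_iff w i j q (by omega) hjn hq1).mpr hperq)
      omega)
  exact ⟨k, by omega, by omega, hk1, hk2, hk3⟩


end Aux

/-- The number of runs in a word of length `n` is strictly less than `n`. -/
theorem runs_lt_length {α : Type u} (w : List α) (hw : w ≠ []) :
    {ij : ℕ × ℕ | IsRun w ij.1 ij.2}.ncard < w.length := by
  classical
  letI : LinearOrder α := IsWellOrder.linearOrder WellOrderingRel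
  have hn : 1 ≤ w.length := List.length_pos_iff.mpr hw
  set S := {ij : ℕ × ℕ | IsRun w ij.1 ij.2} with hS
  have hex : ∀ ij : ℕ × ℕ, ij ∈ S → ∃ k, 1 ≤ k ∧ k ≤ w.length - 1 ∧ KeyProp w ij.1 ij.2 k :=
    fun ij hij => exists_key w hij
  set g : ℕ × ℕ → ℕ := fun ij => if hij : ij ∈ S then (hex ij hij).choose else 0 with hg
  have hmaps : ∀ ij ∈ S, g ij ∈ (↑(Finset.Icc 1 (w.length - 1)) : Set ℕ) := by
    intro ij hij
    obtain ⟨h1, h2, -⟩ := (hex ij hij).choose_spec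
    simp only [hg, dif_pos hij, Finset.coe_Icc, Set.mem_Icc]
    exact ⟨h1, h2⟩
  have hinj : Set.InjOn g S := by
    intro ij1 h1 ij2 h2 heq
    rw [hg] at heq
    simp only [dif_pos h1, dif_pos h2] at heq
    obtain ⟨-, -, hkp1⟩ := (hex ij1 h1).choose_spec
    obtain ⟨-, -, hkp2⟩ := (hex ij2 h2).choose_spec
    rw [heq] at hkp1
    obtain ⟨e1, e2⟩ := key_unique w h1 h2 hkp1 hkp2
    exact Prod.ext e1 e2
  have hcard := Set.ncard_le_ncard_of_injOn g hmaps hinj (Finset.finite_toSet _)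
  rw [Set.ncard_coe_finset, Nat.card_Icc] at hcard
  omega
end

section
/- In any word w, each position k > 0 is the starting position of the assigned greatest proper suffix of at most one run; here each run [i..j] of smallest period p is assigned the starting position of the lexicographically greatest proper suffix of w[i..j] with respect to ordering < if j+1 < |w| and w[j+1] > w[j-p+1], and with respect to the reverse ordering otherwise. -/
open List

universe u

/-- `k` is the starting position of the greatest proper suffix of the factor `w[i..j]`,
with respect to the strict order `lt` on words. -/
def IsGreatestProperSuffixPos {α : Type u} (lt : List α → List α → Prop)
    (w : List α) (i j k : ℕ) : Prop :=
  i < k ∧ k ≤ j ∧ ∀ k', i < k' → k' ≤ j → k' ≠ k → lt (factor w k' j) (factor w k j)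

/-- The run `[i..j]` with smallest period `p` is assigned the starting position of its
greatest proper suffix with respect to `<` if `j+1 < |w|` and `w[j+1] > w[j-p+1]`, and with
respect to the reverse ordering otherwise. -/
noncomputable def AssignedPos {α : Type u} [LinearOrder α] (w : List α) (i j k : ℕ) : Prop :=
  ((j + 1 < w.length ∧
      ∃ a b, w[j + 1]? = some a ∧ w[j + 1 - minPeriod (factor w i j)]? = some b ∧ b < a) →
    IsGreatestProperSuffixPos (List.Lex (· < ·)) w i j k) ∧
  (¬ (j + 1 < w.length ∧
      ∃ a b, w[j + 1]? = some a ∧ w[j + 1 - minPeriod (factor w i j)]? = some b ∧ b < a) →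
    IsGreatestProperSuffixPos (List.Lex (· > ·)) w i j k)

namespace RunsAux
variable {α : Type u}

theorem factor_length (w : List α) {i j : ℕ} (hj : j < w.length) (hij : i ≤ j) :
    (factor w i j).length = j - i + 1 := by
  simp [factor]; omega

theorem factor_getElem? (w : List α) {i j : ℕ} {s : ℕ} (hs : s < j - i + 1) :
    (factor w i j)[s]? = w[i + s]? := by
  unfold factor
  rw [List.getElem?_take]
  simp [hs, List.getElem?_drop]

theorem not_lex_prefix {r : α → α → Prop} (irr : ∀ a, ¬ r a a) :
    ∀ (l₂ l₁ : List α), l₂.length ≤ l₁.length →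
      (∀ s, s < l₂.length → l₁[s]? = l₂[s]?) → ¬ List.Lex r l₁ l₂ := by
  intro l₂
  induction l₂ with
  | nil => intro l₁ _ _ h; cases h
  | cons b t₂ ih =>
    intro l₁ hlen heq h
    cases h with
    | nil => simp at hlen
    | rel h' =>
      have h0 := heq 0 (by simp)
      simp at h0
      subst h0; exact irr _ h'
    | @cons a l₁ l₂ h' =>
      exact ih l₁ (by simpa using hlen)
        (fun s hs => by simpa using heq (s+1) (by simpa using Nat.succ_lt_succ hs)) h'

theorem lex_nth {r : α → α → Prop} (irr : ∀ a, ¬ r a a) :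
    ∀ (n : ℕ) (l₁ l₂ : List α), List.Lex r l₁ l₂ →
      (∀ s, s < n → l₁[s]? = l₂[s]?) → n < l₁.length → n < l₂.length →
      l₁[n]? = l₂[n]? ∨ ∃ a b, l₁[n]? = some a ∧ l₂[n]? = some b ∧ r a b := by
  intro n
  induction n with
  | zero =>
    intro l₁ l₂ h heq h1 h2
    cases h with
    | nil => simp at h1
    | rel h' => right; exact ⟨_, _, by simp, by simp, h'⟩
    | cons h' => left; simp
  | succ n ih =>
    intro l₁ l₂ h heq h1 h2
    cases h with
    | nil => simp at h1
    | rel h' =>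
      have h0 := heq 0 (by omega)
      simp at h0
      subst h0; exact absurd h' (irr _)
    | @cons a l₁ l₂ h' =>
      have := ih l₁ l₂ h'
        (fun s hs => by simpa using heq (s+1) (by omega))
        (by simpa using h1) (by simpa using h2)
      simpa using this

theorem hasPeriodLen_of (w : List α) {i j q : ℕ} (hq : 1 ≤ q)
    (hper : ∀ x, i ≤ x → x + q ≤ j → w[x]? = w[x + q]?) :
    HasPeriodLen (factor w i j) q := by
  refine ⟨hq, fun s hs => ?_⟩
  have hlen : (factor w i j).length ≤ j - i + 1 := by
    first | (simp [factor]; omega) | simp [factor]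
  have hs1 : s < j - i + 1 := by omega
  have hs2 : s + q < j - i + 1 := by omega
  rw [factor_getElem? w hs1, factor_getElem? w hs2]
  have h := hper (i + s) (by omega) (by omega)
  have e1 : i + s + q = i + (s + q) := by omega
  rw [e1] at h
  exact h

theorem minPeriod_le_of (w : List α) {i j q : ℕ} (hq : 1 ≤ q)
    (hper : ∀ x, i ≤ x → x + q ≤ j → w[x]? = w[x + q]?) :
    minPeriod (factor w i j) ≤ q :=
  Nat.sInf_le (hasPeriodLen_of w hq hper)

theorem minPeriod_mem (w : List α) {i j : ℕ} (hij : i ≤ j) :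
    HasPeriodLen (factor w i j) (minPeriod (factor w i j)) := by
  have hne : {p | HasPeriodLen (factor w i j) p}.Nonempty := by
    refine ⟨j - i + 1, ⟨by omega, fun s hs => ?_⟩⟩
    have hlen : (factor w i j).length ≤ j - i + 1 := by
      first | (simp [factor]; omega) | simp [factor]
    omega
  simpa [minPeriod] using Nat.sInf_mem hne

theorem minPeriod_pos (w : List α) {i j : ℕ} (hij : i ≤ j) :
    1 ≤ minPeriod (factor w i j) :=
  (minPeriod_mem w hij).1

theorem period_opt (w : List α) {i j : ℕ} (hj : j < w.length) (hij : i ≤ j) :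
    ∀ x, i ≤ x → x + minPeriod (factor w i j) ≤ j →
      w[x]? = w[x + minPeriod (factor w i j)]? := by
  intro x hx hxp
  set p := minPeriod (factor w i j) with hp
  have hmem := minPeriod_mem w hij
  have h2 := hmem.2 (x - i) (by rw [factor_length w hj hij]; omega)
  rw [factor_getElem? w (by omega), factor_getElem? w (by omega)] at h2
  have e1 : i + (x - i) = x := by omega
  have e2 : i + (x - i + p) = x + p := by omega
  rw [e1, e2] at h2
  exact h2

theorem period_iter (w : List α) {i j q : ℕ}
    (hper : ∀ x, i ≤ x → x + q ≤ j → w[x]? = w[x + q]?) :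
    ∀ m x, i ≤ x → x + q * m ≤ j → w[x]? = w[x + q * m]? := by
  intro m
  induction m with
  | zero => simp
  | succ m ih =>
    intro x hx hxm
    have h1 : w[x]? = w[x + q]? := hper x hx (by nlinarith)
    have h2 := ih (x + q) (by omega) (by rw [Nat.mul_succ] at hxm; omega)
    rw [h1, h2]
    congr 1
    rw [Nat.mul_succ]; omega

theorem gps_not_prefix {rel : α → α → Prop} (irr : ∀ a, ¬ rel a a)
    {w : List α} {i J k t : ℕ}
    (hG : IsGreatestProperSuffixPos (List.Lex rel) w i J k) (hJ : J < w.length)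
    (ht1 : i < t) (ht2 : t < k)
    (heq : ∀ s, k + s ≤ J → w[t + s]? = w[k + s]?) : False := by
  have hkJ : k ≤ J := hG.2.1
  have hlex := hG.2.2 t ht1 (by omega) (by omega)
  refine not_lex_prefix irr (factor w k J) (factor w t J) ?_ ?_ hlex
  · rw [factor_length w hJ (by omega), factor_length w hJ (by omega)]; omega
  · intro s hs
    rw [factor_length w hJ (by omega)] at hs
    rw [factor_getElem? w (show s < J - t + 1 by omega),
        factor_getElem? w (show s < J - k + 1 by omega)]
    exact heq s (by omega)

theorem gps_extract {rel : α → α → Prop} (irr : ∀ a, ¬ rel a a)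
    {w : List α} {i J k t s' : ℕ}
    (hG : IsGreatestProperSuffixPos (List.Lex rel) w i J k) (hJ : J < w.length)
    (ht1 : i < t) (htk : t ≠ k) (htJ : t ≤ J)
    (h1 : t + s' ≤ J) (h2 : k + s' ≤ J)
    (heq : ∀ s, s < s' → w[t + s]? = w[k + s]?) :
    w[t + s']? = w[k + s']? ∨
      ∃ a b, w[t + s']? = some a ∧ w[k + s']? = some b ∧ rel a b := by
  have hkJ : k ≤ J := hG.2.1
  have hik : i < k := hG.1
  have hlex := hG.2.2 t ht1 htJ htk
  have := lex_nth irr s' (factor w t J) (factor w k J) hlex ?_ ?_ ?_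
  · rcases this with h | ⟨a, b, ha, hb, hab⟩
    · left
      rwa [factor_getElem? w (show s' < J - t + 1 by omega),
        factor_getElem? w (show s' < J - k + 1 by omega)] at h
    · right
      rw [factor_getElem? w (show s' < J - t + 1 by omega)] at ha
      rw [factor_getElem? w (show s' < J - k + 1 by omega)] at hb
      exact ⟨a, b, ha, hb, hab⟩
  · intro s hs
    rw [factor_getElem? w (show s < J - t + 1 by omega),
        factor_getElem? w (show s < J - k + 1 by omega)]
    exact heq s hs
  · rw [factor_length w hJ (by omega)]; omega
  · rw [factor_length w hJ (by omega)]; omega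

section Runs
variable [LinearOrder α] {w : List α}

/-- The period of a run does not extend one step to the right. -/
theorem right_break {i j : ℕ} (h : IsRun w i j) (hn : j + 1 < w.length) :
    w[j + 1]? ≠ w[j + 1 - minPeriod (factor w i j)]? := by
  set p := minPeriod (factor w i j) with hp
  have hij : i ≤ j := le_of_lt h.1
  have hj : j < w.length := h.2.1
  have hp1 : 1 ≤ p := minPeriod_pos w hij
  have h2p : 2 * p ≤ j - i + 1 := h.2.2.1
  have hper := period_opt w hj hij
  intro heq
  have hle : minPeriod (factor w i (j + 1)) ≤ p := by
    apply minPeriod_le_of w hp1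
    intro x hx hxp
    rcases Nat.lt_or_ge (x + p) (j + 1) with hlt | hge
    · exact hper x hx (by omega)
    · have hx1 : x = j + 1 - p := by omega
      have hx2 : x + p = j + 1 := by omega
      rw [show x + p = j + 1 from hx2, hx1]
      exact heq.symm
  have := h.2.2.2.2 hn
  omega

/-- The assigned position lies within one period of the start. -/
theorem k_window {rel : α → α → Prop} (irr : ∀ a, ¬ rel a a) {i j k : ℕ}
    (h : IsRun w i j) (hG : IsGreatestProperSuffixPos (List.Lex rel) w i j k) :
    k ≤ i + minPeriod (factor w i j) := by
  set p := minPeriod (factor w i j) with hp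
  have hij : i ≤ j := le_of_lt h.1
  have hj : j < w.length := h.2.1
  have hp1 : 1 ≤ p := minPeriod_pos w hij
  have hper := period_opt w hj hij
  by_contra hcon
  push_neg at hcon
  refine gps_not_prefix irr hG hj (show i < k - p by omega) (by omega) ?_
  intro s hs
  have := hper (k - p + s) (by omega) (by omega)
  have e : k - p + s + p = k + s := by omega
  rw [e] at this
  exact this

theorem gps_of_assigned {i j k : ℕ} (ha : AssignedPos w i j k) :
    ∃ rel : α → α → Prop, (∀ a, ¬ rel a a) ∧ (∀ a b, rel a b → rel b a → False) ∧
      IsGreatestProperSuffixPos (List.Lex rel) w i j k := by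
  by_cases hc : (j + 1 < w.length ∧
      ∃ a b, w[j + 1]? = some a ∧ w[j + 1 - minPeriod (factor w i j)]? = some b ∧ b < a)
  · exact ⟨(· < ·), fun a => lt_irrefl a, fun a b h1 h2 => absurd h1 (lt_asymm h2), ha.1 hc⟩
  · exact ⟨(· > ·), fun a => lt_irrefl a, fun a b h1 h2 => absurd h1 (lt_asymm h2), ha.2 hc⟩

theorem caseA {i j i' k : ℕ} (h : IsRun w i j) (h' : IsRun w i' j)
    (ha : AssignedPos w i j k) (ha' : AssignedPos w i' j k) (hii' : i < i') : False := by
  classical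
  obtain ⟨rel, irr, asym, hG⟩ := gps_of_assigned ha
  obtain ⟨rel', irr', asym', hG'⟩ := gps_of_assigned ha'
  set p := minPeriod (factor w i j) with hpdef
  set q := minPeriod (factor w i' j) with hqdef
  have hij : i < j := h.1
  have hij' : i' < j := h'.1
  have hj : j < w.length := h.2.1
  have h2p : 2 * p ≤ j - i + 1 := h.2.2.1
  have h2q : 2 * q ≤ j - i' + 1 := h'.2.2.1
  have hp1 : 1 ≤ p := minPeriod_pos w (le_of_lt hij)
  have hq1 : 1 ≤ q := minPeriod_pos w (le_of_lt hij')
  have hper := period_opt w hj (le_of_lt hij)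
  have hper' := period_opt w hj (le_of_lt hij')
  rw [← hpdef] at hper
  rw [← hqdef] at hper'
  have hik : i < k := hG.1
  have hkj : k ≤ j := hG.2.1
  have hik' : i' < k := hG'.1
  have hkp : k ≤ i + p := k_window irr h hG
  have hkq : k ≤ i' + q := k_window irr' h' hG'
  have hqlep : q ≤ p := by
    apply minPeriod_le_of w hp1
    intro x hx hxp
    exact hper x (by omega) hxp
  have hqltp : q < p := by
    rcases Nat.lt_or_ge q p with h1 | h1
    · exact h1
    · exfalso
      have hlm := h'.2.2.2.1 (by omega)
      have : minPeriod (factor w (i' - 1) j) ≤ p := by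
        apply minPeriod_le_of w hp1
        intro x hx hxp
        exact hper x (by omega) hxp
      omega
  have hkq' : k + 1 ≤ i' + q := by
    rcases Nat.lt_or_ge k (i' + q) with h1 | h1
    · omega
    · exfalso
      refine gps_not_prefix irr hG hj hii' (by omega) ?_
      intro s hs
      have := hper' (i' + s) (by omega) (by omega)
      rw [show i' + s + q = k + s by omega] at this
      exact this
  have hi'p : i' + p ≤ j := by omega
  have hndvd : ¬ q ∣ p := by
    rintro ⟨m, hm⟩
    have hm1 : 1 ≤ m := by
      rcases Nat.eq_zero_or_pos m with h0 | h0
      · rw [h0, Nat.mul_zero] at hm; omega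
      · exact h0
    obtain ⟨m', rfl⟩ : ∃ m', m = m' + 1 := ⟨m - 1, by omega⟩
    have perq : ∀ x, i ≤ x → x + q ≤ j → w[x]? = w[x + q]? := by
      intro x hx hxq
      rcases Nat.lt_or_ge x i' with hxlt | hxge
      · have h1 : w[x]? = w[x + p]? := hper x hx (by omega)
        rcases Nat.lt_or_ge (x + q) i' with h2 | h2
        · have h3 : w[x + q]? = w[x + q + p]? := hper (x + q) (by omega) (by omega)
          have h4 : w[x + p]? = w[x + p + q]? := hper' (x + p) (by omega) (by omega)
          rw [h1, h4, h3]
          rw [show x + q + p = x + p + q by omega]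
        · have e : x + q + q * m' = x + p := by rw [hm, Nat.mul_succ]; omega
          have h3 := period_iter w hper' m' (x + q) (by omega) (by omega)
          rw [e] at h3
          rw [h1, ← h3]
      · exact hper' x hxge hxq
    have : p ≤ q := le_trans (by omega) (minPeriod_le_of w hq1 perq)
    omega
  set r := p % q with hrdef
  have hr1 : 1 ≤ r := by
    rcases Nat.eq_zero_or_pos r with h0 | h0
    · exact absurd (Nat.dvd_of_mod_eq_zero h0) hndvd
    · omega
  have hrq : r < q := Nat.mod_lt _ (by omega)
  have hdm : q * (p / q) + r = p := Nat.div_add_mod p q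
  have hdiv1 : 1 ≤ p / q := (Nat.one_le_div_iff (by omega)).mpr (le_of_lt hqltp)
  have hqq : q * 1 ≤ q * (p / q) := Nat.mul_le_mul_left q hdiv1
  have hrpq : r + q ≤ p := by omega
  -- the periodic stream of the inner run
  have ST : ∀ x, i' ≤ x → x ≤ j → w[x]? = w[i' + (x - i') % q]? := by
    intro x
    induction x using Nat.strong_induction_on with
    | _ x ih =>
      intro hx1 hx2
      rcases Nat.lt_or_ge (x - i') q with hlt | hge
      · rw [Nat.mod_eq_of_lt hlt, show i' + (x - i') = x by omega]
      · have h1 : w[x - q]? = w[x]? := by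
          have := hper' (x - q) (by omega) (by omega)
          rw [show x - q + q = x by omega] at this
          exact this
        rw [← h1, ih (x - q) (by omega) (by omega) (by omega)]
        have e : (x - i') % q = (x - q - i') % q := by
          rw [show x - i' = (x - q - i') + q by omega, Nat.add_mod_right]
        rw [e]
  have STeq : ∀ u v, i' ≤ u → u ≤ j → i' ≤ v → v ≤ j →
      (u - i') % q = (v - i') % q → w[u]? = w[v]? := by
    intro u v h1 h2 h3 h4 h5
    rw [ST u h1 h2, ST v h3 h4, h5]
  have hcong : ∀ z, i' ≤ z + r → z + p ≤ j → w[z + r]? = w[z + p]? := by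
    intro z h1 h2
    refine STeq (z + r) (z + p) h1 (by omega) (by omega) h2 ?_
    rw [show z + p - i' = (z + r - i') + q * (p / q) by omega,
      Nat.add_mul_mod_self_left]
  -- some position within the first period breaks the r-shift
  have hD : ∃ x, x < q ∧ w[i' + x]? ≠ w[i' + x + r]? := by
    by_contra hcon
    push_neg at hcon
    have perr : ∀ y, i' ≤ y → y + r ≤ j → w[y]? = w[y + r]? := by
      intro y hy1 hy2
      have hsplit : q * ((y - i') / q) + (y - i') % q = y - i' := Nat.div_add_mod _ _
      set x := (y - i') % q with hxdef
      have hxq : x < q := Nat.mod_lt _ (by omega)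
      have e1 : w[y]? = w[i' + x]? := ST y hy1 (by omega)
      have e2 : w[i' + x]? = w[i' + x + r]? := hcon x hxq
      have e3 : w[i' + x + r]? = w[y + r]? := by
        refine STeq (i' + x + r) (y + r) (by omega) (by omega) (by omega) hy2 ?_
        rw [show y + r - i' = (i' + x + r - i') + q * ((y - i') / q) by omega,
          Nat.add_mul_mod_self_left]
      rw [e1, e2, e3]
    have : q ≤ r := le_trans (by omega) (minPeriod_le_of w hr1 perr)
    omega
  set x0 := Nat.find hD with hx0def
  have hP : x0 < q ∧ w[i' + x0]? ≠ w[i' + x0 + r]? := Nat.find_spec hD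
  have hmin : ∀ x, x < x0 → x < q → w[i' + x]? = w[i' + x + r]? := by
    intro x hx hxq
    by_contra hne
    exact Nat.find_min hD hx ⟨hxq, hne⟩
  -- the break position cannot come before k, nor before j - p
  have key : ¬ (i' + x0 + p ≤ j) := by
    intro hyp
    have h1 : w[i' + x0]? = w[i' + x0 + p]? := hper (i' + x0) (by omega) hyp
    have h2 : w[i' + x0 + r]? = w[i' + x0 + p]? := hcong (i' + x0) (by omega) hyp
    exact hP.2 (h1.trans h2.symm)
  have hx0k : k ≤ i' + x0 := by
    by_contra hcon
    exact key (by omega)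
  have hbound : j + 2 ≤ i' + p + q := by
    by_contra hcon
    exact key (by omega)
  have hi'ipq : i + p + 1 ≤ i' + q := by omega
  -- witness A : position k - r
  have hx0q : x0 < q := hP.1
  have hx0j : i' + x0 + r + 1 ≤ j := by omega
  have hAex : w[i' + x0]? = w[i' + x0 + r]? ∨
      ∃ a b, w[i' + x0]? = some a ∧ w[i' + x0 + r]? = some b ∧ rel a b := by
    have hkr : r < k := by omega
    have htAi : i < k - r := by omega
    have hres := gps_extract irr hG hj (t := k - r) (s' := i' + x0 + r - k)
      htAi (by omega) (by omega) (by omega) (by omega) ?_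
    · rw [show k - r + (i' + x0 + r - k) = i' + x0 by omega,
        show k + (i' + x0 + r - k) = i' + x0 + r by omega] at hres
      exact hres
    · intro s hs
      rcases Nat.lt_or_ge (k - r + s) i' with hzlt | hzge
      · have h1 : w[k - r + s]? = w[k - r + s + p]? := hper (k - r + s) (by omega) (by omega)
        have h2 : w[k - r + s + r]? = w[k - r + s + p]? := hcong (k - r + s) (by omega) (by omega)
        rw [h1, ← h2, show k - r + s + r = k + s by omega]
      · have hx : k - r + s - i' < x0 := by omega
        have := hmin (k - r + s - i') hx (by omega)
        rw [show i' + (k - r + s - i') + r = k + s by omega,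
          show i' + (k - r + s - i') = k - r + s by omega] at this
        exact this
  -- witness B : position k + r
  have hBex : w[i' + x0 + r]? = w[i' + x0]? ∨
      ∃ a b, w[i' + x0 + r]? = some a ∧ w[i' + x0]? = some b ∧ rel a b := by
    have htBj : k + r ≤ j := by omega
    have hres := gps_extract irr hG hj (t := k + r) (s' := i' + x0 - k)
      (by omega) (by omega) (by omega) (by omega) (by omega) ?_
    · rw [show k + r + (i' + x0 - k) = i' + x0 + r by omega,
        show k + (i' + x0 - k) = i' + x0 by omega] at hres
      exact hres
    · intro s hs
      have hx : k + s - i' < x0 := by omega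
      have := hmin (k + s - i') hx (by omega)
      rw [show i' + (k + s - i') + r = k + r + s by omega,
        show i' + (k + s - i') = k + s by omega] at this
      exact this.symm
  rcases hAex with hA | ⟨a, b, ha1, hb1, hab⟩
  · exact hP.2 hA
  rcases hBex with hB | ⟨a2, b2, ha2, hb2, hab2⟩
  · exact hP.2 hB.symm
  rw [ha1] at hb2
  rw [hb1] at ha2
  cases Option.some.inj hb2
  cases Option.some.inj ha2
  exact asym _ _ hab hab2

theorem caseB_mixed {i j i' j' k : ℕ} (h : IsRun w i j) (h' : IsRun w i' j')
    {relR relR' : α → α → Prop}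
    (irrR : ∀ a, ¬ relR a a) (irrR' : ∀ a, ¬ relR' a a)
    (hGr : IsGreatestProperSuffixPos (List.Lex relR) w i j k)
    (hGr' : IsGreatestProperSuffixPos (List.Lex relR') w i' j' k)
    (hopp : ∀ x y, relR x y → relR' x y → False)
    (hjj' : j < j')
    (hfin : ∀ a c, w[j + 1]? = some a →
      w[j + 1 - minPeriod (factor w i j)]? = some c → relR' c a → False) : False := by
  classical
  set p := minPeriod (factor w i j) with hpdef
  set q := minPeriod (factor w i' j') with hqdef
  have hij : i < j := h.1
  have hij' : i' < j' := h'.1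
  have hj : j < w.length := h.2.1
  have hj' : j' < w.length := h'.2.1
  have h2p : 2 * p ≤ j - i + 1 := h.2.2.1
  have h2q : 2 * q ≤ j' - i' + 1 := h'.2.2.1
  have hp1 : 1 ≤ p := minPeriod_pos w (le_of_lt hij)
  have hq1 : 1 ≤ q := minPeriod_pos w (le_of_lt hij')
  have hper := period_opt w hj (le_of_lt hij)
  have hper' := period_opt w hj' (le_of_lt hij')
  rw [← hpdef] at hper
  rw [← hqdef] at hper'
  have hik : i < k := hGr.1
  have hkj : k ≤ j := hGr.2.1
  have hik' : i' < k := hGr'.1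
  have hkp : k ≤ i + p := k_window irrR h hGr
  have hkq : k ≤ i' + q := k_window irrR' h' hGr'
  have hjn : j + 1 < w.length := by omega
  have hbreak : w[j + 1]? ≠ w[j + 1 - p]? := right_break h hjn
  -- no divergence is possible between suffixes at t and k up to position j
  have hE : ∀ t, i < t → i' < t → t ≤ j → t ≠ k →
      ∀ s, t + s ≤ j → k + s ≤ j → w[t + s]? = w[k + s]? := by
    intro t ht1 ht2 ht3 ht4 s
    induction s using Nat.strong_induction_on with
    | _ s ih =>
      intro hs1 hs2
      have heqpre : ∀ s', s' < s → w[t + s']? = w[k + s']? := fun s' hs' =>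
        ih s' hs' (by omega) (by omega)
      have e1 := gps_extract irrR hGr hj ht1 ht4 ht3 hs1 hs2 heqpre
      rcases e1 with e1 | ⟨a, b, ha1, hb1, hab⟩
      · exact e1
      have e2 := gps_extract irrR' hGr' hj' ht2 ht4 (by omega) (by omega) (by omega) heqpre
      rcases e2 with e2 | ⟨a2, b2, ha2, hb2, hab2⟩
      · exact e2
      rw [ha1] at ha2
      rw [hb1] at hb2
      cases Option.some.inj ha2
      cases Option.some.inj hb2
      exact (hopp _ _ hab hab2).elim
  -- hence one of the runs starts at k - 1
  have hM : i = k - 1 ∨ i' = k - 1 := by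
    by_contra hcon
    push_neg at hcon
    have ht1 : i < k - 1 := by omega
    have ht2 : i' < k - 1 := by omega
    refine gps_not_prefix irrR hGr hj ht1 (by omega) ?_
    intro s hs
    exact hE (k - 1) ht1 ht2 (by omega) (by omega) s (by omega) hs
  -- the factor w[k..j] is constant
  have hconstK : ∀ t, k ≤ t → t ≤ j → w[t]? = w[k]? := by
    intro t ht1 ht2
    rcases Nat.eq_or_lt_of_le ht1 with he | hlt
    · rw [← he]
    · have := hE t (by omega) (by omega) ht2 (by omega) 0 (by omega) (by omega)
      simpa using this
  -- the whole factor w[i..j] is constant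
  have hconstI : ∀ x, i ≤ x → x ≤ j → w[x]? = w[k]? := by
    intro x hx1 hx2
    rcases Nat.lt_or_ge x k with hlt | hge
    · have h1 : w[x]? = w[x + p]? := hper x hx1 (by omega)
      rw [h1]
      exact hconstK (x + p) (by omega) (by omega)
    · exact hconstK x hge hx2
  have hc : w[j + 1 - p]? = w[k]? := hconstI (j + 1 - p) (by omega) (by omega)
  have hacne : w[j + 1]? ≠ w[k]? := fun e => hbreak (e.trans hc.symm)
  -- the inner period is at least 2
  have hq2 : 2 ≤ q := by
    rcases Nat.lt_or_ge q 2 with h1 | h1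
    · exfalso
      have hq1' : q = 1 := by omega
      have := hper' j (by omega) (by omega)
      rw [hq1'] at this
      exact hacne ((this.symm).trans (hconstK j (by omega) (by omega)))
    · exact h1
  rcases Nat.lt_or_ge j' (j + q) with hcase | hcase
  · -- short case: j' < j + q
    have hqle : q ≤ j - i' := by omega
    rcases hM with hM | hM
    · -- i = k - 1 and i' < k - 1
      rcases Nat.eq_or_lt_of_le (show i' ≤ k - 1 by omega) with he | hlt
      · -- i' = k - 1 : everything in the longer run is constant
        exfalso
        have hAll : ∀ x, x ≤ j' → i' ≤ x → w[x]? = w[k]? := by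
          intro x
          induction x using Nat.strong_induction_on with
          | _ x ih =>
            intro hx1 hx2
            rcases Nat.lt_or_ge j x with hgt | hle
            · have h1 := hper' (x - q) (by omega) (by omega)
              rw [show x - q + q = x by omega] at h1
              rw [← h1]
              exact ih (x - q) (by omega) (by omega) (by omega)
            · rcases Nat.lt_or_ge x k with hlt2 | hge2
              · have : x = k - 1 := by omega
                rw [this]
                exact hconstI (k - 1) (by omega) (by omega)
              · exact hconstK x hge2 hle
        exact hacne (hAll (j + 1) (by omega) (by omega))
      · -- witness t = i on the longer run
        have hres := gps_extract irrR' hGr' hj' (t := i) (s' := j - k + 1)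
          (by omega) (by omega) (by omega) (by omega) (by omega) ?_
        · rw [show i + (j - k + 1) = j by omega, show k + (j - k + 1) = j + 1 by omega] at hres
          rcases hres with he2 | ⟨a, b, ha1, hb1, hab⟩
          · exact hacne (he2.symm.trans (hconstK j (by omega) (by omega)))
          · have hc2 : w[j + 1 - p]? = some a := by
              rw [hc, ← hconstK j (by omega) (by omega)]
              exact ha1
            exact hfin b a hb1 hc2 hab
        · intro s hs
          have e1 : w[i + s]? = w[k]? := hconstI (i + s) (by omega) (by omega)
          have e2 : w[k + s]? = w[k]? := hconstK (k + s) (by omega) (by omega)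
          rw [e1, e2]
    · -- i' = k - 1 : everything in the longer run is constant
      have hAll : ∀ x, x ≤ j' → i' ≤ x → w[x]? = w[k]? := by
        intro x
        induction x using Nat.strong_induction_on with
        | _ x ih =>
          intro hx1 hx2
          rcases Nat.lt_or_ge j x with hgt | hle
          · have h1 := hper' (x - q) (by omega) (by omega)
            rw [show x - q + q = x by omega] at h1
            rw [← h1]
            exact ih (x - q) (by omega) (by omega) (by omega)
          · rcases Nat.lt_or_ge x k with hlt2 | hge2
            · have : x = k - 1 := by omega
              rw [this]
              exact hconstI (k - 1) (by omega) (by omega)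
            · exact hconstK x hge2 hle
      exact hacne (hAll (j + 1) (by omega) (by omega))
  · -- long case: j + q ≤ j' ; witness t = k - 1 + q on the longer run
    have hres := gps_extract irrR' hGr' hj' (t := k - 1 + q) (s' := j - k + 1)
      (by omega) (by omega) (by omega) (by omega) (by omega) ?_
    · rw [show k - 1 + q + (j - k + 1) = j + q by omega,
        show k + (j - k + 1) = j + 1 by omega] at hres
      have hjq : w[j + q]? = w[k]? := by
        have := hper' j (by omega) (by omega)
        rw [← this]
        exact hconstK j (by omega) (by omega)
      rcases hres with he2 | ⟨a, b, ha1, hb1, hab⟩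
      · exact hacne (he2.symm.trans hjq)
      · have hc2 : w[j + 1 - p]? = some a := by
          rw [hc, ← hjq]
          exact ha1
        exact hfin b a hb1 hc2 hab
    · intro s hs
      have e0 := hper' (k - 1 + s) (by omega) (by omega)
      rw [show k - 1 + s + q = k - 1 + q + s by omega] at e0
      have e1 : w[k - 1 + s]? = w[k]? := hconstI (k - 1 + s) (by omega) (by omega)
      have e2 : w[k + s]? = w[k]? := hconstK (k + s) (by omega) (by omega)
      rw [← e0, e1, e2]

theorem caseB {i j i' j' k : ℕ} (h : IsRun w i j) (h' : IsRun w i' j')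
    (ha : AssignedPos w i j k) (ha' : AssignedPos w i' j' k) (hjj' : j < j') : False := by
  classical
  obtain ⟨rel0, irr0, asym0, hG0⟩ := gps_of_assigned ha
  obtain ⟨rel0', irr0', asym0', hG0'⟩ := gps_of_assigned ha'
  set p := minPeriod (factor w i j) with hpdef
  set q := minPeriod (factor w i' j') with hqdef
  have hij : i < j := h.1
  have hij' : i' < j' := h'.1
  have hj : j < w.length := h.2.1
  have hj' : j' < w.length := h'.2.1
  have h2p : 2 * p ≤ j - i + 1 := h.2.2.1
  have hp1 : 1 ≤ p := minPeriod_pos w (le_of_lt hij)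
  have hper := period_opt w hj (le_of_lt hij)
  rw [← hpdef] at hper
  have hik : i < k := hG0.1
  have hkj : k ≤ j := hG0.2.1
  have hik' : i' < k := hG0'.1
  have hkp : k ≤ i + p := k_window irr0 h hG0
  have hjn : j + 1 < w.length := by omega
  have hbreak : w[j + 1]? ≠ w[j + 1 - p]? := right_break h hjn
  -- the main extraction along the period p inside the longer run
  have hext : ∀ (rel' : α → α → Prop), (∀ a, ¬ rel' a a) →
      IsGreatestProperSuffixPos (List.Lex rel') w i' j' k →
      ∃ a b, w[j + 1]? = some a ∧ w[j + 1 - p]? = some b ∧ rel' a b := by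
    intro rel' irr' hG'
    have hres := gps_extract irr' hG' hj' (t := k + p) (s' := j + 1 - p - k)
      (by omega) (by omega) (by omega) (by omega) (by omega) ?_
    · rw [show k + p + (j + 1 - p - k) = j + 1 by omega,
        show k + (j + 1 - p - k) = j + 1 - p by omega] at hres
      rcases hres with he | he
      · exact absurd he hbreak
      · exact he
    · intro s hs
      have := hper (k + s) (by omega) (by omega)
      rw [show k + s + p = k + p + s by omega] at this
      exact this.symm
  by_cases hcr : (j + 1 < w.length ∧
      ∃ a b, w[j + 1]? = some a ∧ w[j + 1 - p]? = some b ∧ b < a)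
  · by_cases hcr' : (j' + 1 < w.length ∧
        ∃ a b, w[j' + 1]? = some a ∧ w[j' + 1 - q]? = some b ∧ b < a)
    · -- both use the < order
      obtain ⟨a, b, ha1, hb1, hab⟩ := hext (· < ·) (fun a => lt_irrefl a) (ha'.1 hcr')
      obtain ⟨-, a0, b0, ha0, hb0, h0⟩ := hcr
      rw [ha1] at ha0
      rw [hb1] at hb0
      cases Option.some.inj ha0
      cases Option.some.inj hb0
      exact absurd hab (lt_asymm h0)
    · -- mixed: r uses <, r' uses >
      refine caseB_mixed (relR := (· < ·)) (relR' := (· > ·)) h h'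
        (fun a => lt_irrefl a) (fun a => lt_irrefl a)
        (ha.1 hcr) (ha'.2 hcr') (fun x y h1 h2 => absurd h1 (lt_asymm h2)) hjj' ?_
      intro a c hsa hsc hrel
      obtain ⟨-, a0, b0, ha0, hb0, h0⟩ := hcr
      rw [hsa] at ha0
      rw [hsc] at hb0
      cases Option.some.inj ha0
      cases Option.some.inj hb0
      exact absurd h0 (lt_asymm hrel)
  · by_cases hcr' : (j' + 1 < w.length ∧
        ∃ a b, w[j' + 1]? = some a ∧ w[j' + 1 - q]? = some b ∧ b < a)
    · -- mixed: r uses >, r' uses <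
      refine caseB_mixed (relR := (· > ·)) (relR' := (· < ·)) h h'
        (fun a => lt_irrefl a) (fun a => lt_irrefl a)
        (ha.2 hcr) (ha'.1 hcr') (fun x y h1 h2 => absurd h2 (lt_asymm h1)) hjj' ?_
      intro a c hsa hsc hrel
      exact hcr ⟨hjn, a, c, hsa, hsc, hrel⟩
    · -- both use the > order
      obtain ⟨a, b, ha1, hb1, hab⟩ := hext (· > ·) (fun a => lt_irrefl a) (ha'.2 hcr')
      exact hcr ⟨hjn, a, b, ha1, hb1, hab⟩

end Runs

end RunsAux

/-- Each position `k > 0` is the starting position of the assigned greatest proper suffix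
of at most one run. -/
theorem assigned_position_unique {α : Type u} [LinearOrder α] (w : List α) (k : ℕ)
    (hk : 0 < k) (i j i' j' : ℕ)
    (h : IsRun w i j) (h' : IsRun w i' j')
    (ha : AssignedPos w i j k) (ha' : AssignedPos w i' j' k) :
    i = i' ∧ j = j' := by
  rcases lt_trichotomy j j' with hj | hj | hj
  · exact absurd hj (fun hj => RunsAux.caseB h h' ha ha' hj)
  · subst hj
    rcases lt_trichotomy i i' with hi | hi | hi
    · exact absurd hi (fun hi => RunsAux.caseA h h' ha ha' hi)
    · exact ⟨hi, rfl⟩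
    · exact absurd hi (fun hi => RunsAux.caseA h' h ha' ha hi)
  · exact absurd hj (fun hj => RunsAux.caseB h' h ha' ha hj)
end
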